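/- Let k be a field of characteristic ≠ 2. (i) For every 4-dimensional unital division k-algebra A admitting a Kleinian pair, the trace bilinear form τ_A(x, y) = tr(L_{x·y}) is symmetric and non-degenerate. (ii) If A and B are two such algebras and φ : A → B is a bijective algebra morphism, then τ_A(x, y) = τ_B(φ(x), φ(y)) for all x, y ∈ A. -/
import Mathlib


open Module Function

variable {k : Type} [Field k]

/-- A Kleinian pair for a nonassociative `k`-algebra `(A, mul)`: a pair of distinct commuting
automorphisms, each of order 2. -/
def IsKleinPair {A : Type} [AddCommGroup A] [Module k A]
    (mul : A →ₗ[k] A →ₗ[k] A) (α β : A ≃ₗ[k] A) : Prop :=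
  (∀ x y : A, α (mul x y) = mul (α x) (α y)) ∧
  (∀ x y : A, β (mul x y) = mul (β x) (β y)) ∧
  (∀ x : A, α (α x) = x) ∧ (∀ x : A, β (β x) = x) ∧
  (∀ x : A, α (β x) = β (α x)) ∧
  α ≠ LinearEquiv.refl k A ∧ β ≠ LinearEquiv.refl k A ∧ α ≠ β

/-- The trace bilinear form `τ_A(x, y) = tr(L_{x·y})` of a finite-dimensional
nonassociative algebra. -/
noncomputable def traceForm {k A : Type} [Field k] [AddCommGroup A] [Module k A]
    (mul : A →ₗ[k] A →ₗ[k] A) (x y : A) : k :=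
  LinearMap.trace k A (mul (mul x y))

namespace KleinAux

variable {A : Type} [AddCommGroup A] [Module k A]

/-- joint eigenspace -/
def V (α β : A ≃ₗ[k] A) (s t : k) : Submodule k A where
  carrier := {x | α x = s • x ∧ β x = t • x}
  add_mem' := by
    rintro a b ⟨ha1, ha2⟩ ⟨hb1, hb2⟩
    exact ⟨by simp [map_add, ha1, hb1, smul_add], by simp [map_add, ha2, hb2, smul_add]⟩
  zero_mem' := ⟨by simp, by simp⟩
  smul_mem' := by
    rintro c a ⟨h1, h2⟩
    exact ⟨by rw [map_smul, h1, smul_comm], by rw [map_smul, h2, smul_comm]⟩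

theorem mem_V {α β : A ≃ₗ[k] A} {s t : k} {x : A} :
    x ∈ V α β s t ↔ α x = s • x ∧ β x = t • x := Iff.rfl

/-- projection onto joint eigenspace -/
def q (α β : A ≃ₗ[k] A) (s t : k) (x : A) : A :=
  (4:k)⁻¹ • (x + s • α x + t • β x + (s*t) • α (β x))

variable {α β : A ≃ₗ[k] A}

theorem q_mem (hαα : ∀ x : A, α (α x) = x) (hββ : ∀ x : A, β (β x) = x)
    (hcomm : ∀ x : A, α (β x) = β (α x)) {s t : k}
    (hs : s = 1 ∨ s = -1) (ht : t = 1 ∨ t = -1) (x : A) :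
    q α β s t x ∈ V α β s t := by
  rcases hs with rfl | rfl <;> rcases ht with rfl | rfl <;>
    refine ⟨?_, ?_⟩ <;>
    simp only [q, map_add, map_smul, hαα, hββ, hcomm] <;> module

theorem q_sum (h4 : (4:k) ≠ 0) (x : A) :
    q α β 1 1 x + q α β 1 (-1) x + q α β (-1) 1 x + q α β (-1) (-1) x = x := by
  simp only [q]
  match_scalars <;> field_simp <;> norm_num

theorem q_on_V {s t s' t' : k} {x : A} (hx : x ∈ V α β s' t') :
    q α β s t x = ((4:k)⁻¹ * ((1+s*s')*(1+t*t'))) • x := by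
  obtain ⟨h1, h2⟩ := hx
  simp only [q, h1, h2, map_smul]
  match_scalars
  ring

theorem q_on_V_same (h4 : (4:k) ≠ 0) {s t : k} (hs : s = 1 ∨ s = -1) (ht : t = 1 ∨ t = -1)
    {x : A} (hx : x ∈ V α β s t) : q α β s t x = x := by
  rw [q_on_V hx]
  have hc : (4:k)⁻¹ * ((1+s*s)*(1+t*t)) = 1 := by
    rcases hs with rfl | rfl <;> rcases ht with rfl | rfl <;> field_simp <;> norm_num
  rw [hc, one_smul]

theorem q_on_V_other {s t s' t' : k} (hst : s*s' = -1 ∨ t*t' = -1) {x : A}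
    (hx : x ∈ V α β s' t') : q α β s t x = 0 := by
  rw [q_on_V hx]
  rcases hst with h | h <;> rw [h] <;> norm_num

theorem q_add (s t : k) (x y : A) : q α β s t (x + y) = q α β s t x + q α β s t y := by
  simp only [q, map_add, smul_add]
  module

theorem q_smul (s t : k) (c : k) (x : A) : q α β s t (c • x) = c • q α β s t x := by
  simp only [q, map_smul]
  match_scalars <;> ring

theorem mul_mem_V (mul : A →ₗ[k] A →ₗ[k] A)
    (hα : ∀ x y : A, α (mul x y) = mul (α x) (α y))
    (hβ : ∀ x y : A, β (mul x y) = mul (β x) (β y))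
    {s t s' t' : k} {x y : A} (hx : x ∈ V α β s t) (hy : y ∈ V α β s' t') :
    mul x y ∈ V α β (s*s') (t*t') := by
  refine ⟨?_, ?_⟩
  · simp only [hα, hx.1, hy.1, map_smul, LinearMap.smul_apply, smul_smul]
    module
  · simp only [hβ, hx.2, hy.2, map_smul, LinearMap.smul_apply, smul_smul]
    module

theorem map_one (mul : A →ₗ[k] A →ₗ[k] A) (one : A)
    (hα : ∀ x y : A, α (mul x y) = mul (α x) (α y))
    (hαα : ∀ x : A, α (α x) = x)
    (hone : ∀ x : A, mul one x = x ∧ mul x one = x) : α one = one := by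
  have h1 : ∀ z : A, mul (α one) z = z := by
    intro z
    have h := hα one (α z)
    rw [(hone (α z)).1, hαα] at h
    exact h.symm
  have h2 := h1 one
  rwa [(hone (α one)).2] at h2

/-- conjugation invariance of the trace of left multiplication -/
theorem trace_conj [FiniteDimensional k A] (mul : A →ₗ[k] A →ₗ[k] A)
    (hα : ∀ x y : A, α (mul x y) = mul (α x) (α y))
    (hαα : ∀ x : A, α (α x) = x) (z : A) :
    LinearMap.trace k A (mul (α z)) = LinearMap.trace k A (mul z) := by
  have hA : (α.toLinearMap * α.toLinearMap : Module.End k A) = 1 :=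
    LinearMap.ext hαα
  have hm : mul (α z) = α.toLinearMap * mul z * α.toLinearMap := by
    ext x
    show mul (α z) x = α (mul z (α x))
    rw [hα, hαα]
  rw [hm, LinearMap.trace_mul_comm, ← mul_assoc, hA, one_mul]

theorem trace_eq_zero_left [FiniteDimensional k A] (hchar : (2:k) ≠ 0)
    (mul : A →ₗ[k] A →ₗ[k] A)
    (hα : ∀ x y : A, α (mul x y) = mul (α x) (α y))
    (hαα : ∀ x : A, α (α x) = x) {v : A} (hv : α v = (-1 : k) • v) :
    LinearMap.trace k A (mul v) = 0 := by
  have h := trace_conj mul hα hαα v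
  rw [hv, map_smul, map_smul, smul_eq_mul] at h
  have h2 : (2:k) * LinearMap.trace k A (mul v) = 0 := by
    linear_combination -h
  exact (mul_eq_zero.mp h2).resolve_left hchar

end KleinAux

open KleinAux

/-- Let `k` be a field of characteristic ≠ 2.
(i) For every 4-dimensional unital division `k`-algebra `A` admitting a Kleinian pair, the
trace bilinear form `τ_A(x, y) = tr(L_{x·y})` is symmetric and non-degenerate.
(ii) Every bijective algebra morphism `φ : A → B` between two such algebras is orthogonal:
`τ_A(x, y) = τ_B(φ(x), φ(y))` for all `x, y ∈ A`. -/


theorem traceForm_symm_nondeg_and_orthogonal (hchar : (2 : k) ≠ 0)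
    (A : Type) [AddCommGroup A] [Module k A] [FiniteDimensional k A]
    (mulA : A →ₗ[k] A →ₗ[k] A) (oneA : A)
    (h4 : finrank k A = 4)
    (honeA : ∀ x : A, mulA oneA x = x ∧ mulA x oneA = x)
    (hdivA : ∀ a : A, a ≠ 0 →
      Function.Bijective (fun x => mulA a x) ∧ Function.Bijective (fun x => mulA x a))
    (hklA : ∃ α β : A ≃ₗ[k] A, IsKleinPair mulA α β) :
    -- (i) symmetry and non-degeneracy of τ_A
    ((∀ x y : A, traceForm mulA x y = traceForm mulA y x) ∧
     (∀ x : A, (∀ y : A, traceForm mulA x y = 0) → x = 0)) ∧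
    -- (ii) orthogonality of bijective algebra morphisms
    (∀ (B : Type) [AddCommGroup B] [Module k B] [FiniteDimensional k B]
       (mulB : B →ₗ[k] B →ₗ[k] B) (oneB : B),
       finrank k B = 4 →
       (∀ x : B, mulB oneB x = x ∧ mulB x oneB = x) →
       (∀ b : B, b ≠ 0 →
         Function.Bijective (fun x => mulB b x) ∧ Function.Bijective (fun x => mulB x b)) →
       (∃ α β : B ≃ₗ[k] B, IsKleinPair mulB α β) →
       ∀ φ : A →ₗ[k] B, Function.Bijective φ →
         (∀ x y : A, φ (mulA x y) = mulB (φ x) (φ y)) →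
         ∀ x y : A, traceForm mulA x y = traceForm mulB (φ x) (φ y)) := by
  obtain ⟨α, β, hα, hβ, hαα, hββ, hcomm, hα_ne, hβ_ne, hαβ_ne⟩ := hklA
  have h4k : (4:k) ≠ 0 := by
    have h : (4:k) = 2 * 2 := by norm_num
    rw [h]; exact mul_ne_zero hchar hchar
  -- basic facts
  have hnt : Nontrivial A := Module.finrank_pos_iff.mp (by rw [h4]; norm_num)
  have hone0 : oneA ≠ 0 := by
    intro h
    obtain ⟨u, v, huv⟩ := hnt
    apply huv
    have hu := (honeA u).1
    have hv := (honeA v).1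
    rw [h] at hu hv
    simp only [map_zero, LinearMap.zero_apply] at hu hv
    rw [← hu, ← hv]
  have hone_mem : oneA ∈ V α β 1 1 := by
    refine ⟨?_, ?_⟩
    · rw [one_smul]; exact map_one mulA oneA hα hαα honeA
    · rw [one_smul]; exact map_one mulA oneA hβ hββ honeA
  -- product of nonzero eigenspaces is nonzero
  have hclos : ∀ s t s' t' : k, V α β s t ≠ ⊥ → V α β s' t' ≠ ⊥ →
      V α β (s*s') (t*t') ≠ ⊥ := by
    intro s t s' t' h1 h2
    obtain ⟨a, ha, ha0⟩ := (Submodule.ne_bot_iff _).mp h1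
    obtain ⟨b, hb, hb0⟩ := (Submodule.ne_bot_iff _).mp h2
    refine (Submodule.ne_bot_iff _).mpr ⟨mulA a b, mul_mem_V mulA hα hβ ha hb, ?_⟩
    intro hz
    apply hb0
    have hinj := (hdivA a ha0).1.injective
    exact hinj (hz.trans (map_zero (mulA a)).symm)
  -- the three nontrivial eigenspaces are nonzero
  have hPR : V α β (-1) 1 ≠ ⊥ ∨ V α β (-1) (-1) ≠ ⊥ := by
    by_contra h
    push_neg at h
    have e1 := h.1
    have e2 := h.2
    apply hα_ne
    apply LinearEquiv.ext
    intro x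
    show α x = x
    have hxx := q_sum (α := α) (β := β) h4k x
    have hz1 : q α β (-1) 1 x = 0 := by
      have := q_mem hαα hββ hcomm (Or.inr rfl) (Or.inl rfl) x
      rw [e1] at this; simpa using this
    have hz2 : q α β (-1) (-1) x = 0 := by
      have := q_mem hαα hββ hcomm (Or.inr rfl) (Or.inr rfl) x
      rw [e2] at this; simpa using this
    rw [hz1, hz2, add_zero, add_zero] at hxx
    have m11 := (q_mem hαα hββ hcomm (Or.inl rfl) (Or.inl rfl) x (α := α) (β := β)).1
    have m1m := (q_mem hαα hββ hcomm (Or.inl rfl) (Or.inr rfl) x (α := α) (β := β)).1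
    calc α x = α (q α β 1 1 x + q α β 1 (-1) x) := by rw [hxx]
    _ = q α β 1 1 x + q α β 1 (-1) x := by rw [map_add, m11, m1m, one_smul, one_smul]
    _ = x := hxx
  have hQR : V α β 1 (-1) ≠ ⊥ ∨ V α β (-1) (-1) ≠ ⊥ := by
    by_contra h
    push_neg at h
    have e1 := h.1
    have e2 := h.2
    apply hβ_ne
    apply LinearEquiv.ext
    intro x
    show β x = x
    have hxx := q_sum (α := α) (β := β) h4k x
    have hz1 : q α β 1 (-1) x = 0 := by
      have := q_mem hαα hββ hcomm (Or.inl rfl) (Or.inr rfl) x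
      rw [e1] at this; simpa using this
    have hz2 : q α β (-1) (-1) x = 0 := by
      have := q_mem hαα hββ hcomm (Or.inr rfl) (Or.inr rfl) x
      rw [e2] at this; simpa using this
    rw [hz1, hz2, add_zero, add_zero] at hxx
    have m11 := (q_mem hαα hββ hcomm (Or.inl rfl) (Or.inl rfl) x (α := α) (β := β)).2
    have mm1 := (q_mem hαα hββ hcomm (Or.inr rfl) (Or.inl rfl) x (α := α) (β := β)).2
    calc β x = β (q α β 1 1 x + q α β (-1) 1 x) := by rw [hxx]
    _ = q α β 1 1 x + q α β (-1) 1 x := by rw [map_add, m11, mm1, one_smul, one_smul]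
    _ = x := hxx
  have hPQ : V α β (-1) 1 ≠ ⊥ ∨ V α β 1 (-1) ≠ ⊥ := by
    by_contra h
    push_neg at h
    have e1 := h.1
    have e2 := h.2
    apply hαβ_ne
    apply LinearEquiv.ext
    intro x
    show α x = β x
    have hxx := q_sum (α := α) (β := β) h4k x
    have hz1 : q α β (-1) 1 x = 0 := by
      have := q_mem hαα hββ hcomm (Or.inr rfl) (Or.inl rfl) x
      rw [e1] at this; simpa using this
    have hz2 : q α β 1 (-1) x = 0 := by
      have := q_mem hαα hββ hcomm (Or.inl rfl) (Or.inr rfl) x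
      rw [e2] at this; simpa using this
    rw [hz2, hz1, add_zero, add_zero] at hxx
    have m11 := q_mem hαα hββ hcomm (Or.inl rfl) (Or.inl rfl) x (α := α) (β := β)
    have mmm := q_mem hαα hββ hcomm (Or.inr rfl) (Or.inr rfl) x (α := α) (β := β)
    calc α x = α (q α β 1 1 x + q α β (-1) (-1) x) := by rw [hxx]
    _ = q α β 1 1 x + (-1:k) • q α β (-1) (-1) x := by rw [map_add, m11.1, mmm.1, one_smul]
    _ = β (q α β 1 1 x + q α β (-1) (-1) x) := by rw [map_add, m11.2, mmm.2, one_smul]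
    _ = β x := by rw [hxx]
  have hV11 : V α β 1 1 ≠ ⊥ := (Submodule.ne_bot_iff _).mpr ⟨oneA, hone_mem, hone0⟩
  have hall : V α β (-1) 1 ≠ ⊥ ∧ V α β 1 (-1) ≠ ⊥ ∧ V α β (-1) (-1) ≠ ⊥ := by
    by_cases hR : V α β (-1) (-1) = ⊥
    · have hP := hPR.resolve_right (not_not.mpr hR)
      have hQ := hQR.resolve_right (not_not.mpr hR)
      have hprod := hclos (-1) 1 1 (-1) hP hQ
      norm_num at hprod
      exact absurd hR hprod
    · rcases hPQ with hP | hQ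
      · have hQ := hclos (-1) 1 (-1) (-1) hP hR
        norm_num at hQ
        exact ⟨hP, hQ, hR⟩
      · have hP := hclos 1 (-1) (-1) (-1) hQ hR
        norm_num at hP
        exact ⟨hP, hQ, hR⟩
  obtain ⟨hVm1, hV1m, hVmm⟩ := hall
  -- the decomposition equivalence
  let E : A ≃ₗ[k] (V α β 1 1 × V α β 1 (-1) × V α β (-1) 1 × V α β (-1) (-1)) :=
    { toFun := fun x =>
        (⟨q α β 1 1 x, q_mem hαα hββ hcomm (Or.inl rfl) (Or.inl rfl) x⟩,
         ⟨q α β 1 (-1) x, q_mem hαα hββ hcomm (Or.inl rfl) (Or.inr rfl) x⟩,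
         ⟨q α β (-1) 1 x, q_mem hαα hββ hcomm (Or.inr rfl) (Or.inl rfl) x⟩,
         ⟨q α β (-1) (-1) x, q_mem hαα hββ hcomm (Or.inr rfl) (Or.inr rfl) x⟩)
      map_add' := by
        intro x y
        refine Prod.ext ?_ (Prod.ext ?_ (Prod.ext ?_ ?_)) <;>
          exact Subtype.ext (q_add _ _ _ _)
      map_smul' := by
        intro c x
        refine Prod.ext ?_ (Prod.ext ?_ (Prod.ext ?_ ?_)) <;>
          exact Subtype.ext (q_smul _ _ _ _)
      invFun := fun p => (p.1 : A) + (p.2.1 : A) + (p.2.2.1 : A) + (p.2.2.2 : A)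
      left_inv := fun x => q_sum h4k x
      right_inv := by
        rintro ⟨⟨a, ha⟩, ⟨b, hb⟩, ⟨c, hc⟩, ⟨d, hd⟩⟩
        refine Prod.ext ?_ (Prod.ext ?_ (Prod.ext ?_ ?_)) <;> apply Subtype.ext <;>
          simp only [q_add]
        · rw [q_on_V_same h4k (Or.inl rfl) (Or.inl rfl) ha,
            q_on_V_other (Or.inr (by norm_num)) hb,
            q_on_V_other (Or.inl (by norm_num)) hc,
            q_on_V_other (Or.inl (by norm_num)) hd]
          show a + 0 + 0 + 0 = a
          abel
        · rw [q_on_V_same h4k (Or.inl rfl) (Or.inr rfl) hb,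
            q_on_V_other (Or.inr (by norm_num)) ha,
            q_on_V_other (Or.inl (by norm_num)) hc,
            q_on_V_other (Or.inl (by norm_num)) hd]
          show 0 + b + 0 + 0 = b
          abel
        · rw [q_on_V_same h4k (Or.inr rfl) (Or.inl rfl) hc,
            q_on_V_other (Or.inl (by norm_num)) ha,
            q_on_V_other (Or.inl (by norm_num)) hb,
            q_on_V_other (Or.inr (by norm_num)) hd]
          show 0 + 0 + c + 0 = c
          abel
        · rw [q_on_V_same h4k (Or.inr rfl) (Or.inr rfl) hd,
            q_on_V_other (Or.inl (by norm_num)) ha,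
            q_on_V_other (Or.inl (by norm_num)) hb,
            q_on_V_other (Or.inr (by norm_num)) hc]
          show 0 + 0 + 0 + d = d
          abel }
  have hrk := E.finrank_eq
  rw [h4, Module.finrank_prod, Module.finrank_prod, Module.finrank_prod] at hrk
  have pos : ∀ (s t : k), V α β s t ≠ ⊥ → 0 < finrank k (V α β s t) := fun s t h =>
    Module.finrank_pos_iff.mpr (Submodule.nontrivial_iff_ne_bot.mpr h)
  have p11 := pos 1 1 hV11
  have p1m := pos 1 (-1) hV1m
  have pm1 := pos (-1) 1 hVm1
  have pmm := pos (-1) (-1) hVmm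
  have f11 : finrank k (V α β 1 1) = 1 := by omega
  have f1m : finrank k (V α β 1 (-1)) = 1 := by omega
  have fm1 : finrank k (V α β (-1) 1) = 1 := by omega
  have fmm : finrank k (V α β (-1) (-1)) = 1 := by omega
  have hfr : ∀ s t : k, (s = 1 ∨ s = -1) → (t = 1 ∨ t = -1) →
      finrank k (V α β s t) = 1 := by
    intro s t hs ht
    rcases hs with rfl | rfl <;> rcases ht with rfl | rfl <;> assumption
  have hspan : Submodule.span k {oneA} = V α β 1 1 :=
    Submodule.eq_of_le_of_finrank_le
      (Submodule.span_le.mpr (Set.singleton_subset_iff.mpr hone_mem))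
      (by rw [f11, finrank_span_singleton hone0])
  -- trace facts
  have hT0 : ∀ {s t : k}, (s = -1 ∨ t = -1) → ∀ v ∈ V α β s t,
      LinearMap.trace k A (mulA v) = 0 := by
    rintro s t (rfl | rfl) v hv
    · exact trace_eq_zero_left hchar mulA hα hαα hv.1
    · exact trace_eq_zero_left (α := β) hchar mulA hβ hββ hv.2
  have hT1 : LinearMap.trace k A (mulA oneA) = 4 := by
    have hid : mulA oneA = LinearMap.id := LinearMap.ext fun x => (honeA x).1
    rw [hid, LinearMap.trace_id, h4]
    norm_num
  have hTV11 : ∀ v ∈ V α β 1 1, LinearMap.trace k A (mulA v) = 0 → v = 0 := by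
    intro v hv htr
    rw [← hspan] at hv
    obtain ⟨c, rfl⟩ := Submodule.mem_span_singleton.mp hv
    rw [map_smul, map_smul, smul_eq_mul, hT1] at htr
    rw [(mul_eq_zero.mp htr).resolve_right h4k, zero_smul]
  have hTmul : ∀ (s1 t1 s2 t2 : k) (u w : A), u ∈ V α β s1 t1 → w ∈ V α β s2 t2 →
      (s1*s2 = -1 ∨ t1*t2 = -1) →
      LinearMap.trace k A (mulA (mulA u w)) = 0 := by
    intro s1 t1 s2 t2 u w hu hw hor
    exact hT0 hor _ (mul_mem_V mulA hα hβ hu hw)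
  -- commutation of elements of a single 1-dimensional eigenspace
  have hcomm_in : ∀ (s t : k), (s = 1 ∨ s = -1) → (t = 1 ∨ t = -1) → ∀ a b : A,
      a ∈ V α β s t → b ∈ V α β s t → mulA a b = mulA b a := by
    intro s t hs ht a b ha hb
    by_cases ha0 : a = 0
    · rw [ha0]; simp
    · have hsp : Submodule.span k {a} = V α β s t :=
        Submodule.eq_of_le_of_finrank_le
          (Submodule.span_le.mpr (Set.singleton_subset_iff.mpr ha))
          (by rw [hfr s t hs ht, finrank_span_singleton ha0])
      rw [← hsp] at hb
      obtain ⟨c, rfl⟩ := Submodule.mem_span_singleton.mp hb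
      simp [map_smul]
  have hpair : ∀ (s1 t1 s2 t2 : k), (s1 = 1 ∨ s1 = -1) → (t1 = 1 ∨ t1 = -1) →
      (s2 = 1 ∨ s2 = -1) → (t2 = 1 ∨ t2 = -1) → ∀ a b : A,
      a ∈ V α β s1 t1 → b ∈ V α β s2 t2 →
      LinearMap.trace k A (mulA (mulA a b)) = LinearMap.trace k A (mulA (mulA b a)) := by
    intro s1 t1 s2 t2 hs1 ht1 hs2 ht2 a b ha hb
    have hsgn : (s1 = s2 ∧ t1 = t2) ∨ (s1*s2 = -1 ∨ t1*t2 = -1) := by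
      rcases hs1 with rfl|rfl <;> rcases ht1 with rfl|rfl <;>
        rcases hs2 with rfl|rfl <;> rcases ht2 with rfl|rfl <;> norm_num
    rcases hsgn with ⟨h1, h2⟩ | hor
    · subst h1; subst h2
      rw [hcomm_in s1 t1 hs1 ht1 a b ha hb]
    · rw [hTmul s1 t1 s2 t2 a b ha hb hor,
        hTmul s2 t2 s1 t1 b a hb ha
          (by rcases hor with h|h
              · exact Or.inl (by rw [mul_comm]; exact h)
              · exact Or.inr (by rw [mul_comm]; exact h))]
  have hsym : ∀ x y : A, LinearMap.trace k A (mulA (mulA x y))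
      = LinearMap.trace k A (mulA (mulA y x)) := by
    intro x y
    have o1 : (1:k) = 1 ∨ (1:k) = -1 := Or.inl rfl
    have om : (-1:k) = 1 ∨ (-1:k) = -1 := Or.inr rfl
    have e := fun (s1 t1 s2 t2 : k) hs1 ht1 hs2 ht2 =>
      hpair s1 t1 s2 t2 hs1 ht1 hs2 ht2 (q α β s1 t1 x) (q α β s2 t2 y)
        (q_mem hαα hββ hcomm hs1 ht1 x) (q_mem hαα hββ hcomm hs2 ht2 y)
    rw [← q_sum (α:=α) (β:=β) h4k x, ← q_sum (α:=α) (β:=β) h4k y]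
    simp only [map_add, LinearMap.add_apply]
    linear_combination e 1 1 1 1 o1 o1 o1 o1
    + e 1 1 1 (-1) o1 o1 o1 om
    + e 1 1 (-1) 1 o1 o1 om o1
    + e 1 1 (-1) (-1) o1 o1 om om
    + e 1 (-1) 1 1 o1 om o1 o1
    + e 1 (-1) 1 (-1) o1 om o1 om
    + e 1 (-1) (-1) 1 o1 om om o1
    + e 1 (-1) (-1) (-1) o1 om om om
    + e (-1) 1 1 1 om o1 o1 o1
    + e (-1) 1 1 (-1) om o1 o1 om
    + e (-1) 1 (-1) 1 om o1 om o1
    + e (-1) 1 (-1) (-1) om o1 om om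
    + e (-1) (-1) 1 1 om om o1 o1
    + e (-1) (-1) 1 (-1) om om o1 om
    + e (-1) (-1) (-1) 1 om om om o1
    + e (-1) (-1) (-1) (-1) om om om om
  -- key reduction for nondegeneracy
  have hkey : ∀ (s t : k), (s = 1 ∨ s = -1) → (t = 1 ∨ t = -1) → ∀ x y : A,
      y ∈ V α β s t →
      LinearMap.trace k A (mulA (mulA x y)) =
      LinearMap.trace k A (mulA (mulA (q α β s t x) y)) := by
    intro s t hs ht x y hy
    have Z : ∀ (s1 t1 : k), (s1 = 1 ∨ s1 = -1) → (t1 = 1 ∨ t1 = -1) →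
        (s1*s = -1 ∨ t1*t = -1) →
        LinearMap.trace k A (mulA (mulA (q α β s1 t1 x) y)) = 0 := fun s1 t1 hs1 ht1 hor =>
      hTmul s1 t1 s t _ _ (q_mem hαα hββ hcomm hs1 ht1 x) hy hor
    have hexp : mulA x y = mulA (q α β 1 1 x) y + mulA (q α β 1 (-1) x) y
        + mulA (q α β (-1) 1 x) y + mulA (q α β (-1) (-1) x) y := by
      conv_lhs => rw [← q_sum (α:=α) (β:=β) h4k x]
      simp [map_add, LinearMap.add_apply]
    rw [hexp]
    simp only [map_add]
    rcases hs with rfl | rfl <;> rcases ht with rfl | rfl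
    · rw [Z 1 (-1) (Or.inl rfl) (Or.inr rfl) (Or.inr (by norm_num)),
        Z (-1) 1 (Or.inr rfl) (Or.inl rfl) (Or.inl (by norm_num)),
        Z (-1) (-1) (Or.inr rfl) (Or.inr rfl) (Or.inl (by norm_num))]
      ring
    · rw [Z 1 1 (Or.inl rfl) (Or.inl rfl) (Or.inr (by norm_num)),
        Z (-1) 1 (Or.inr rfl) (Or.inl rfl) (Or.inl (by norm_num)),
        Z (-1) (-1) (Or.inr rfl) (Or.inr rfl) (Or.inl (by norm_num))]
      ring
    · rw [Z 1 1 (Or.inl rfl) (Or.inl rfl) (Or.inl (by norm_num)),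
        Z 1 (-1) (Or.inl rfl) (Or.inr rfl) (Or.inl (by norm_num)),
        Z (-1) (-1) (Or.inr rfl) (Or.inr rfl) (Or.inr (by norm_num))]
      ring
    · rw [Z 1 1 (Or.inl rfl) (Or.inl rfl) (Or.inl (by norm_num)),
        Z 1 (-1) (Or.inl rfl) (Or.inr rfl) (Or.inl (by norm_num)),
        Z (-1) 1 (Or.inr rfl) (Or.inl rfl) (Or.inr (by norm_num))]
      ring
  have hnondeg : ∀ x : A, (∀ y : A, LinearMap.trace k A (mulA (mulA x y)) = 0) → x = 0 := by
    intro x hx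
    have hc : ∀ s t : k, (s = 1 ∨ s = -1) → (t = 1 ∨ t = -1) → q α β s t x = 0 := by
      intro s t hs ht
      by_contra h0
      have hy := q_mem (α:=α) (β:=β) hαα hββ hcomm hs ht x
      have h1 := hx (q α β s t x)
      rw [hkey s t hs ht x _ hy] at h1
      have hs2 : s*s = 1 := by rcases hs with rfl|rfl <;> norm_num
      have ht2 : t*t = 1 := by rcases ht with rfl|rfl <;> norm_num
      have hm : mulA (q α β s t x) (q α β s t x) ∈ V α β 1 1 := by
        have hmm := mul_mem_V mulA hα hβ hy hy
        rwa [hs2, ht2] at hmm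
      have hzero := hTV11 _ hm h1
      exact h0 ((hdivA _ h0).1.injective (hzero.trans (map_zero (mulA _)).symm))
    have hfin := q_sum (α:=α) (β:=β) h4k x
    rw [hc 1 1 (Or.inl rfl) (Or.inl rfl), hc 1 (-1) (Or.inl rfl) (Or.inr rfl),
      hc (-1) 1 (Or.inr rfl) (Or.inl rfl), hc (-1) (-1) (Or.inr rfl) (Or.inr rfl)] at hfin
    simpa using hfin.symm
  refine ⟨⟨fun x y => hsym x y, fun x hx => hnondeg x fun y => hx y⟩, ?_⟩
  -- part (ii)
  intro B _ _ _ mulB oneB _ _ _ _ φ hφ hmor x y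
  let e := LinearEquiv.ofBijective φ hφ
  have hc : mulB (φ (mulA x y)) = e.conj (mulA (mulA x y)) := by
    ext b
    rw [LinearEquiv.conj_apply_apply]
    have hb : φ (e.symm b) = b := by
      have h := e.apply_symm_apply b
      simpa [e, LinearEquiv.ofBijective_apply] using h
    calc mulB (φ (mulA x y)) b = mulB (φ (mulA x y)) (φ (e.symm b)) := by rw [hb]
    _ = φ (mulA (mulA x y) (e.symm b)) := (hmor _ _).symm
    _ = e (mulA (mulA x y) (e.symm b)) := by
        simp [e, LinearEquiv.ofBijective_apply]
  show LinearMap.trace k A (mulA (mulA x y)) = LinearMap.trace k B (mulB (mulB (φ x) (φ y)))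
  rw [← hmor, hc, LinearMap.trace_conj']
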